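/- Let b ≥ 2 and n ≥ 1 be integers, let R_n be a generalized Hammersley point set with discrepancy function D, and let j₁ ∈ ℕ₀ with j₁ ≥ n, m₁ ∈ {0,…,b^{j₁}−1}, ℓ₁ ∈ {1,…,b−1}. Then |∫_{[0,1)²} D(x₁,x₂)·h_{j₁,m₁,ℓ₁}(x₁) dx₁dx₂| = (1/2)·b^{−2j₁−1} / |exp(2πiℓ₁/b) − 1|. -/

import Mathlib

open scoped Classical
open Finset MeasureTheory

/-- `bexp b ℓ k = exp(2πiℓk/b)`. -/
noncomputable def bexp (b ℓ k : ℕ) : ℂ :=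
  Complex.exp (2 * Real.pi * Complex.I * ℓ * k / b)

/-- The `b`-adic Haar function `h_{j,m,ℓ}` on `[0,1)`. -/
noncomputable def haar (b j m ℓ : ℕ) (x : ℝ) : ℂ :=
  ∑ k ∈ Finset.range b,
    if ((b:ℝ)^(j+1))⁻¹ * ((b:ℝ)*m + k) ≤ x ∧ x < ((b:ℝ)^(j+1))⁻¹ * ((b:ℝ)*m + k + 1)
    then bexp b ℓ k else 0

/-- First coordinate of the generalized Hammersley point: `z₁ = tₙ/b + ⋯ + t₁/bⁿ`. -/
noncomputable def z1 (b n : ℕ) (t : Fin n → Fin b) : ℝ :=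
  ∑ i : Fin n, ((t i : ℕ) : ℝ) / (b:ℝ) ^ (n - (i:ℕ))

/-- Second coordinate: `z₂ = s₁(t₁)/b + s₂(t₂)/b² + ⋯ + sₙ(tₙ)/bⁿ`. -/
noncomputable def z2 (b n : ℕ) (s : Fin n → ℕ → ℕ) (t : Fin n → Fin b) : ℝ :=
  ∑ i : Fin n, ((s i (t i : ℕ) : ℕ) : ℝ) / (b:ℝ) ^ ((i:ℕ) + 1)

/-- Each `s i` is either the identity or the reflection `t ↦ b−1−t` on digits. -/
def IsDigitMaps (b n : ℕ) (s : Fin n → ℕ → ℕ) : Prop :=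
  ∀ i, (∀ k, k < b → s i k = k) ∨ (∀ k, k < b → s i k = b - 1 - k)

/-- The discrepancy function of the generalized Hammersley point set. -/
noncomputable def disc (b n : ℕ) (s : Fin n → ℕ → ℕ) (x₁ x₂ : ℝ) : ℝ :=
  (b:ℝ) ^ (-(n:ℤ)) *
      ∑ t : Fin n → Fin b,
        (if z1 b n t < x₁ then (1:ℝ) else 0) * (if z2 b n s t < x₂ then (1:ℝ) else 0)
    - x₁ * x₂

lemma bexp_pow (b ℓ k : ℕ) : bexp b ℓ k = (bexp b ℓ 1) ^ k := by
  rw [bexp, bexp, ← Complex.exp_nat_mul]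
  congr 1
  push_cast
  ring

lemma bexp_one_pow_b (b ℓ : ℕ) (hb : 0 < b) : (bexp b ℓ 1) ^ b = 1 := by
  rw [bexp, ← Complex.exp_nat_mul]
  have hb' : (b:ℂ) ≠ 0 := by exact_mod_cast hb.ne'
  push_cast
  have : (b:ℂ) * (2 * Real.pi * Complex.I * ℓ * 1 / b) = (ℓ:ℂ) * (2 * Real.pi * Complex.I) := by
    field_simp
  rw [this]
  exact Complex.exp_nat_mul_two_pi_mul_I ℓ

lemma bexp_ne_one (b ℓ : ℕ) (hb : 2 ≤ b) (h1 : 1 ≤ ℓ) (h2 : ℓ ≤ b - 1) : bexp b ℓ 1 ≠ 1 := by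
  rw [bexp, Ne, Complex.exp_eq_one_iff]
  rintro ⟨k, hk⟩
  have hb' : (b:ℂ) ≠ 0 := Nat.cast_ne_zero.2 (by omega)
  have hpi : (2 * (Real.pi:ℂ) * Complex.I) ≠ 0 := by
    simp [Real.pi_ne_zero, Complex.I_ne_zero]
  have hc : (ℓ:ℂ) = (k:ℂ) * b := by
    field_simp at hk
    have h : 2 * (Real.pi:ℂ) * Complex.I * ℓ = 2 * Real.pi * Complex.I * (k * b) := by
      push_cast at hk; linear_combination (2 * (Real.pi:ℂ) * Complex.I) * hk
    exact mul_left_cancel₀ hpi h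
  have hr : (ℓ:ℝ) = (k:ℝ) * b := by exact_mod_cast hc
  have hℓb : ℓ < b := lt_of_le_of_lt h2 (by omega)
  rcases le_or_gt k 0 with hk0 | hk0
  · have h3 : (k:ℝ) * b ≤ 0 := mul_nonpos_of_nonpos_of_nonneg (by exact_mod_cast hk0) (by positivity)
    have h4 : (1:ℝ) ≤ ℓ := by exact_mod_cast h1
    linarith [hr ▸ h3]
  · have hk1 : (1:ℝ) ≤ (k:ℝ) := by exact_mod_cast hk0
    have hbr : (0:ℝ) < (b:ℝ) := by positivity
    have h5 : (b:ℝ) ≤ (k:ℝ) * b := le_mul_of_one_le_left hbr.le hk1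
    have h6 : (ℓ:ℝ) < (b:ℝ) := by exact_mod_cast hℓb
    linarith [hr ▸ h5]

lemma sum_bexp (b ℓ : ℕ) (hb : 2 ≤ b) (h1 : 1 ≤ ℓ) (h2 : ℓ ≤ b - 1) :
    ∑ k ∈ range b, (bexp b ℓ 1) ^ k = 0 := by
  rw [geom_sum_eq (bexp_ne_one b ℓ hb h1 h2), bexp_one_pow_b b ℓ (by omega), sub_self, zero_div]

lemma sum_k_mul_pow (x : ℂ) (m : ℕ) :
    (x - 1) * ∑ k ∈ range m, (k:ℂ) * x ^ k
      = ((m:ℂ) - 1) * x ^ m - ∑ k ∈ range m, x ^ k + 1 := by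
  induction m with
  | zero => simp
  | succ m ih =>
    rw [sum_range_succ, sum_range_succ, mul_add, ih]
    push_cast
    ring

lemma sum_k_bexp (b ℓ : ℕ) (hb : 2 ≤ b) (h1 : 1 ≤ ℓ) (h2 : ℓ ≤ b - 1) :
    ∑ k ∈ range b, (k:ℂ) * (bexp b ℓ 1) ^ k = b / (bexp b ℓ 1 - 1) := by
  have hne : bexp b ℓ 1 - 1 ≠ 0 := sub_ne_zero.2 (bexp_ne_one b ℓ hb h1 h2)
  have h := sum_k_mul_pow (bexp b ℓ 1) b
  rw [bexp_one_pow_b b ℓ (by omega), sum_bexp b ℓ hb h1 h2] at h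
  field_simp
  linear_combination h

lemma z2_nonneg (b n : ℕ) (s : Fin n → ℕ → ℕ) (t : Fin n → Fin b) : 0 ≤ z2 b n s t := by
  apply Finset.sum_nonneg; intro i _; positivity

lemma geom_aux (b : ℕ) (hb : 2 ≤ b) (n : ℕ) :
    ∑ i ∈ range n, ((b:ℝ) - 1) / (b:ℝ) ^ (i+1) = 1 - ((b:ℝ) ^ n)⁻¹ := by
  have hb' : (b:ℝ) ≠ 0 := by positivity
  induction n with
  | zero => simp
  | succ n ih =>
    rw [sum_range_succ, ih]
    have h1 : (b:ℝ) ^ (n+1) ≠ 0 := by positivity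
    field_simp
    ring

lemma z2_lt_one (b n : ℕ) (hb : 2 ≤ b) (s : Fin n → ℕ → ℕ) (hs : IsDigitMaps b n s)
    (t : Fin n → Fin b) : z2 b n s t < 1 := by
  have hb0 : (0:ℝ) < b := by positivity
  have hle : z2 b n s t ≤ 1 - ((b:ℝ) ^ n)⁻¹ := by
    rw [← geom_aux b hb n, z2, ← Fin.sum_univ_eq_sum_range (fun i => ((b:ℝ)-1)/(b:ℝ)^(i+1))]
    apply Finset.sum_le_sum
    intro i _
    apply div_le_div_of_nonneg_right _ (by positivity)
    · have hsb : s i (t i) ≤ b - 1 := by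
        rcases hs i with h | h
        · rw [h _ (t i).isLt]; omega
        · rw [h _ (t i).isLt]; omega
      calc ((s i (t i : ℕ) : ℕ) : ℝ) ≤ ((b - 1 : ℕ) : ℝ) := by exact_mod_cast hsb
        _ = (b:ℝ) - 1 := by push_cast [Nat.cast_sub (by omega : 1 ≤ b)]; ring
  have : (0:ℝ) < ((b:ℝ)^n)⁻¹ := by positivity
  linarith

/-- z1 as integer over b^n -/
lemma z1_eq (b n : ℕ) (hb : 0 < b) (t : Fin n → Fin b) :
    z1 b n t = ((∑ i : Fin n, (t i : ℕ) * b ^ (i:ℕ) : ℕ) : ℝ) / (b:ℝ) ^ n := by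
  rw [z1]
  push_cast
  rw [Finset.sum_div]
  apply Finset.sum_congr rfl
  intro i _
  have hi : (i:ℕ) < n := i.isLt
  have hpow : (b:ℝ) ^ ((i:ℕ)) * (b:ℝ) ^ (n - (i:ℕ)) = (b:ℝ) ^ n := by
    rw [← pow_add]; congr 1; omega
  have hb1 : (b:ℝ) ^ (n - (i:ℕ)) ≠ 0 := by positivity
  have hb2 : (b:ℝ) ^ n ≠ 0 := by positivity
  field_simp
  rw [mul_assoc, mul_comm ((b:ℝ) ^ (n - (i:ℕ))), hpow]

lemma z1_lt_iff (b n j m : ℕ) (hb : 2 ≤ b) (hj : n ≤ j) (t : Fin n → Fin b) (x : ℝ)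
    (hx1 : ((b:ℝ)^j)⁻¹ * m < x) (hx2 : x < ((b:ℝ)^j)⁻¹ * (m+1)) :
    (z1 b n t < x ↔ z1 b n t ≤ ((b:ℝ)^j)⁻¹ * m) := by
  have hb0 : (0:ℝ) < b := by positivity
  have hbn : (0:ℝ) < (b:ℝ)^n := by positivity
  have hbj : (0:ℝ) < (b:ℝ)^j := by positivity
  set K : ℕ := ∑ i : Fin n, (t i : ℕ) * b ^ (i:ℕ) with hK
  have hz : z1 b n t = (K:ℝ) / (b:ℝ)^n := z1_eq b n (by omega) t
  constructor
  · intro h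
    by_contra hc
    push_neg at hc
    -- z1 > m/b^j, so K * b^(j-n) > m, so K * b^(j-n) ≥ m+1, so z1 ≥ (m+1)/b^j > x
    have h1 : (m:ℝ) < (K:ℝ) * (b:ℝ)^(j-n) := by
      rw [hz] at hc
      have : (m:ℝ) / (b:ℝ)^j < (K:ℝ) / (b:ℝ)^n := by
        rw [inv_mul_eq_div] at hc; linarith
      have hpow : (b:ℝ)^(j-n) * (b:ℝ)^n = (b:ℝ)^j := by
        rw [← pow_add]; congr 1; omega
      rw [div_lt_div_iff₀ hbj hbn] at this
      calc (m:ℝ) = (m:ℝ) * (b:ℝ)^n / (b:ℝ)^n := by field_simp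
        _ < (K:ℝ) * (b:ℝ)^j / (b:ℝ)^n := by apply div_lt_div_of_pos_right this hbn
        _ = (K:ℝ) * (b:ℝ)^(j-n) := by rw [← hpow]; field_simp
    have h2 : m < K * b^(j-n) := by exact_mod_cast (by push_cast; exact h1 : (m:ℝ) < ((K * b^(j-n) : ℕ) : ℝ))
    have h3 : (m:ℝ) + 1 ≤ ((K * b^(j-n) : ℕ) : ℝ) := by exact_mod_cast h2
    have h4 : ((b:ℝ)^j)⁻¹ * (m+1) ≤ z1 b n t := by
      rw [hz]
      have hpow : (b:ℝ)^(j-n) * (b:ℝ)^n = (b:ℝ)^j := by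
        rw [← pow_add]; congr 1; omega
      rw [inv_mul_eq_div, div_le_div_iff₀ hbj hbn]
      push_cast at h3
      calc ((m:ℝ)+1) * (b:ℝ)^n ≤ (K:ℝ) * (b:ℝ)^(j-n) * (b:ℝ)^n := by nlinarith
        _ = (K:ℝ) * (b:ℝ)^j := by rw [mul_assoc, hpow]
    linarith
  · intro h; linarith

lemma integral_ind (c : ℝ) (hc : 0 ≤ c) (hc1 : c ≤ 1) :
    ∫ x in Set.Ico (0:ℝ) 1, (if c < x then (1:ℝ) else 0) = 1 - c := by
  have h1 : (fun x : ℝ => if c < x then (1:ℝ) else 0) = Set.indicator (Set.Ioi c) (fun _ => 1) := by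
    ext x; simp [Set.indicator_apply, Set.mem_Ioi]
  rw [h1, MeasureTheory.setIntegral_indicator measurableSet_Ioi]
  have h2 : Set.Ico (0:ℝ) 1 ∩ Set.Ioi c = Set.Ioo c 1 := by
    ext x; simp only [Set.mem_inter_iff, Set.mem_Ico, Set.mem_Ioi, Set.mem_Ioo]
    exact ⟨fun ⟨⟨_, h⟩, h'⟩ => ⟨h', h⟩, fun ⟨h', h⟩ => ⟨⟨le_trans hc h'.le, h⟩, h'⟩⟩
  rw [h2, MeasureTheory.setIntegral_const, Real.volume_real_Ioo_of_le (by linarith), smul_eq_mul, mul_one]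

lemma integrable_ind (c : ℝ) : IntegrableOn (fun x : ℝ => if c < x then (1:ℝ) else 0)
    (Set.Ico (0:ℝ) 1) volume := by
  have h1 : (fun x : ℝ => if c < x then (1:ℝ) else 0) = Set.indicator (Set.Ioi c) (fun _ => 1) := by
    ext x; simp [Set.indicator_apply, Set.mem_Ioi]
  rw [h1]
  exact (MeasureTheory.integrableOn_const (by simp [Real.volume_Ico])).indicator
    measurableSet_Ioi

lemma integral_linear (a b C : ℝ) (h : a ≤ b) :
    ∫ x in Set.Ico a b, (C - x/2) = C*(b-a) - (b^2-a^2)/4 := by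
  rw [MeasureTheory.integral_Ico_eq_integral_Ioo, ← MeasureTheory.integral_Ioc_eq_integral_Ioo,
    ← intervalIntegral.integral_of_le h]
  have h1 : IntervalIntegrable (fun x : ℝ => x/2) volume a b :=
    IntervalIntegrable.div_const intervalIntegral.intervalIntegrable_id 2
  rw [intervalIntegral.integral_sub intervalIntegrable_const h1,
    intervalIntegral.integral_div, _root_.integral_id, intervalIntegral.integral_const,
    smul_eq_mul]
  ring

lemma integrable_linear (a b C : ℝ) : IntegrableOn (fun x : ℝ => C - x/2) (Set.Ico a b) volume := by
  apply MeasureTheory.IntegrableOn.mono_set (t := Set.Icc a b) _ Set.Ico_subset_Icc_self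
  apply Continuous.integrableOn_Icc
  fun_prop


lemma inner_integral (b n : ℕ) (hb : 2 ≤ b) (s : Fin n → ℕ → ℕ) (hs : IsDigitMaps b n s)
    (x₁ : ℝ) :
    ∫ x₂ in Set.Ico (0:ℝ) 1, disc b n s x₁ x₂
      = (b:ℝ) ^ (-(n:ℤ)) * ∑ t : Fin n → Fin b,
          (if z1 b n t < x₁ then (1:ℝ) else 0) * (1 - z2 b n s t) - x₁ / 2 := by
  have hfin : (volume (Set.Ico (0:ℝ) 1)) < ⊤ := by simp [Real.volume_Ico]
  have hint2 : ∀ t : Fin n → Fin b, IntegrableOn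
      (fun x₂ : ℝ => (if z1 b n t < x₁ then (1:ℝ) else 0) * (if z2 b n s t < x₂ then (1:ℝ) else 0))
      (Set.Ico (0:ℝ) 1) volume := by
    intro t
    exact (integrable_ind (z2 b n s t)).const_mul _
  have hintS : IntegrableOn (fun x₂ : ℝ => (b:ℝ) ^ (-(n:ℤ)) * ∑ t : Fin n → Fin b,
      (if z1 b n t < x₁ then (1:ℝ) else 0) * (if z2 b n s t < x₂ then (1:ℝ) else 0))
      (Set.Ico (0:ℝ) 1) volume := by
    apply Integrable.const_mul
    exact MeasureTheory.integrable_finset_sum _ (fun t _ => hint2 t)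
  have hintx : IntegrableOn (fun x₂ : ℝ => x₁ * x₂) (Set.Ico (0:ℝ) 1) volume := by
    apply MeasureTheory.IntegrableOn.mono_set (t := Set.Icc (0:ℝ) 1) _ Set.Ico_subset_Icc_self
    apply Continuous.integrableOn_Icc; fun_prop
  rw [show (fun x₂ : ℝ => disc b n s x₁ x₂) = fun x₂ => ((b:ℝ) ^ (-(n:ℤ)) * ∑ t : Fin n → Fin b,
      (if z1 b n t < x₁ then (1:ℝ) else 0) * (if z2 b n s t < x₂ then (1:ℝ) else 0)) - x₁ * x₂
    from rfl]
  rw [MeasureTheory.integral_sub hintS hintx]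
  rw [MeasureTheory.integral_const_mul]
  rw [MeasureTheory.integral_finset_sum _ (fun t _ => hint2 t)]
  have h1 : ∀ t : Fin n → Fin b,
      ∫ x₂ in Set.Ico (0:ℝ) 1,
        (if z1 b n t < x₁ then (1:ℝ) else 0) * (if z2 b n s t < x₂ then (1:ℝ) else 0)
      = (if z1 b n t < x₁ then (1:ℝ) else 0) * (1 - z2 b n s t) := by
    intro t
    rw [MeasureTheory.integral_const_mul,
      integral_ind _ (z2_nonneg b n s t) (z2_lt_one b n hb s hs t).le]
  rw [Finset.sum_congr rfl (fun t _ => h1 t)]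
  have h2 : ∫ x₂ in Set.Ico (0:ℝ) 1, x₁ * x₂ = x₁ / 2 := by
    rw [MeasureTheory.integral_const_mul, MeasureTheory.integral_Ico_eq_integral_Ioo,
      ← MeasureTheory.integral_Ioc_eq_integral_Ioo,
      ← intervalIntegral.integral_of_le (by norm_num : (0:ℝ) ≤ 1), _root_.integral_id]
    ring
  rw [h2]

lemma haar_zero_left (b j m ℓ : ℕ) (hb : 0 < b) (x : ℝ)
    (hx : x < ((b:ℝ)^(j+1))⁻¹ * ((b:ℝ)*m)) : haar b j m ℓ x = 0 := by
  rw [haar]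
  apply Finset.sum_eq_zero
  intro k _
  rw [if_neg]
  rintro ⟨h1, -⟩
  have hδ : (0:ℝ) ≤ ((b:ℝ)^(j+1))⁻¹ := by positivity
  have : ((b:ℝ)^(j+1))⁻¹ * ((b:ℝ)*m) ≤ ((b:ℝ)^(j+1))⁻¹ * ((b:ℝ)*m + k) := by
    apply mul_le_mul_of_nonneg_left _ hδ
    have : (0:ℝ) ≤ (k:ℝ) := by positivity
    linarith
  linarith

lemma haar_zero_right (b j m ℓ : ℕ) (hb : 0 < b) (x : ℝ)
    (hx : ((b:ℝ)^(j+1))⁻¹ * ((b:ℝ)*m + b) ≤ x) : haar b j m ℓ x = 0 := by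
  rw [haar]
  apply Finset.sum_eq_zero
  intro k hk
  rw [if_neg]
  rintro ⟨-, h2⟩
  have hδ : (0:ℝ) ≤ ((b:ℝ)^(j+1))⁻¹ := by positivity
  have hkb : (k:ℝ) + 1 ≤ (b:ℝ) := by
    have : k + 1 ≤ b := Finset.mem_range.1 hk
    exact_mod_cast this
  have : ((b:ℝ)^(j+1))⁻¹ * ((b:ℝ)*m + k + 1) ≤ ((b:ℝ)^(j+1))⁻¹ * ((b:ℝ)*m + b) := by
    apply mul_le_mul_of_nonneg_left _ hδ
    linarith
  linarith

/-- Proposition 5.1 (vi): for `j₁ ≥ n`, the Haar coefficient of the discrepancy function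
for the index `j = (j₁, −1)` (second factor `h_{−1,0,1} = 1_{[0,1)}`) has absolute value
`(1/2)·b^{−2j₁−1}/|e(ℓ₁)−1|`. -/
theorem abs_haar_coeff_disc_mixed_eq (b n : ℕ) (hb : 2 ≤ b) (hn : 1 ≤ n)
    (s : Fin n → ℕ → ℕ) (hs : IsDigitMaps b n s)
    (j₁ m₁ ℓ₁ : ℕ) (hj : n ≤ j₁) (hm₁ : m₁ < b ^ j₁)
    (hℓ₁ : 1 ≤ ℓ₁) (hℓ₁' : ℓ₁ ≤ b - 1) :
    ‖(∫ x₁ in Set.Ico (0:ℝ) 1, ∫ x₂ in Set.Ico (0:ℝ) 1,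
        ((disc b n s x₁ x₂ : ℝ) : ℂ) * haar b j₁ m₁ ℓ₁ x₁)‖
      = (1/2) * (b:ℝ) ^ (-2*(j₁:ℤ) - 1) /
          ‖(Complex.exp (2 * Real.pi * Complex.I * ℓ₁ / b) - 1)‖ := by
  have hb0 : (0:ℝ) < b := by positivity
  set δ : ℝ := ((b:ℝ)^(j₁+1))⁻¹ with hδdef
  have hδ0 : 0 < δ := by positivity
  set L : ℝ := ((b:ℝ)^j₁)⁻¹ * m₁ with hLdef
  set ω : ℂ := bexp b ℓ₁ 1 with hωdef
  have eL : δ * ((b:ℝ)*m₁) = L := by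
    rw [hLdef, hδdef, pow_succ]
    field_simp
  have eR : δ * ((b:ℝ)*m₁ + b) = ((b:ℝ)^j₁)⁻¹ * (m₁+1) := by
    rw [hδdef, pow_succ]
    field_simp
  have hm1R : ((m₁:ℝ) + 1) ≤ (b:ℝ)^j₁ := by exact_mod_cast (by omega : m₁ + 1 ≤ b ^ j₁)
  set C : ℝ := (b:ℝ) ^ (-(n:ℤ)) * ∑ t : Fin n → Fin b,
      (if z1 b n t ≤ L then (1:ℝ) else 0) * (1 - z2 b n s t) with hCdef
  -- Step 1: inner integral
  have step1 : ∀ x₁ : ℝ, (∫ x₂ in Set.Ico (0:ℝ) 1,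
        ((disc b n s x₁ x₂ : ℝ) : ℂ) * haar b j₁ m₁ ℓ₁ x₁)
      = ((((b:ℝ) ^ (-(n:ℤ)) * ∑ t : Fin n → Fin b,
          (if z1 b n t < x₁ then (1:ℝ) else 0) * (1 - z2 b n s t) - x₁/2 : ℝ)) : ℂ)
          * haar b j₁ m₁ ℓ₁ x₁ := by
    intro x₁
    have h1 : (∫ x₂ in Set.Ico (0:ℝ) 1, ((disc b n s x₁ x₂ : ℝ) : ℂ) * haar b j₁ m₁ ℓ₁ x₁)
        = (∫ x₂ in Set.Ico (0:ℝ) 1, ((disc b n s x₁ x₂ : ℝ) : ℂ)) * haar b j₁ m₁ ℓ₁ x₁ := by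
      simpa [smul_eq_mul] using
        integral_smul_const (μ := volume.restrict (Set.Ico (0:ℝ) 1))
          (fun x₂ => ((disc b n s x₁ x₂ : ℝ) : ℂ)) (haar b j₁ m₁ ℓ₁ x₁)
    rw [h1, show (∫ x₂ in Set.Ico (0:ℝ) 1, ((disc b n s x₁ x₂ : ℝ):ℂ))
        = ((∫ x₂ in Set.Ico (0:ℝ) 1, disc b n s x₁ x₂ : ℝ) : ℂ) from integral_ofReal,
      inner_integral b n hb s hs x₁]
  simp only [step1]
  -- Step 2: a.e. replace by linear function times haar
  have hae : ∀ᵐ x : ℝ, x ≠ L := by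
    rw [MeasureTheory.ae_iff]
    simp only [ne_eq, not_not]
    rw [show {x : ℝ | x = L} = {L} from by ext x; simp]
    exact Real.volume_singleton
  have step2 : (∫ x₁ in Set.Ico (0:ℝ) 1,
        ((((b:ℝ) ^ (-(n:ℤ)) * ∑ t : Fin n → Fin b,
          (if z1 b n t < x₁ then (1:ℝ) else 0) * (1 - z2 b n s t) - x₁/2 : ℝ)) : ℂ)
          * haar b j₁ m₁ ℓ₁ x₁)
      = ∫ x₁ in Set.Ico (0:ℝ) 1, (((C - x₁/2 : ℝ)) : ℂ) * haar b j₁ m₁ ℓ₁ x₁ := by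
    apply MeasureTheory.setIntegral_congr_ae measurableSet_Ico
    filter_upwards [hae] with x hx _
    by_cases h1 : x < δ * ((b:ℝ)*m₁)
    · rw [haar_zero_left b j₁ m₁ ℓ₁ (by omega) x h1, mul_zero, mul_zero]
    by_cases h2 : δ * ((b:ℝ)*m₁ + b) ≤ x
    · rw [haar_zero_right b j₁ m₁ ℓ₁ (by omega) x h2, mul_zero, mul_zero]
    push_neg at h1 h2
    rw [eL] at h1
    rw [eR] at h2
    have hxL : L < x := lt_of_le_of_ne h1 (Ne.symm hx)
    have hsum : (∑ t : Fin n → Fin b,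
        (if z1 b n t < x then (1:ℝ) else 0) * (1 - z2 b n s t))
        = ∑ t : Fin n → Fin b, (if z1 b n t ≤ L then (1:ℝ) else 0) * (1 - z2 b n s t) := by
      apply Finset.sum_congr rfl
      intro t _
      congr 1
      rw [if_congr (z1_lt_iff b n j₁ m₁ hb hj t x hxL h2) rfl rfl]
    rw [hsum]
  rw [step2]
  -- Step 3: compute the integral of the linear function times haar
  have hkb : ∀ k ∈ Finset.range b, (k:ℝ) + 1 ≤ (b:ℝ) := by
    intro k hk
    exact_mod_cast (Finset.mem_range.1 hk : k < b)
  have hsub : ∀ k ∈ Finset.range b,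
      Set.Ico (δ*((b:ℝ)*m₁+k)) (δ*((b:ℝ)*m₁+k+1)) ⊆ Set.Ico (0:ℝ) 1 := by
    intro k hk
    apply Set.Ico_subset_Ico
    · positivity
    · have h1 : δ*((b:ℝ)*m₁+k+1) ≤ δ*((b:ℝ)*m₁+b) :=
        mul_le_mul_of_nonneg_left (by linarith [hkb k hk]) hδ0.le
      have h2 : ((b:ℝ)^j₁)⁻¹*((m₁:ℝ)+1) ≤ ((b:ℝ)^j₁)⁻¹*((b:ℝ)^j₁) :=
        mul_le_mul_of_nonneg_left hm1R (by positivity)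
      rw [inv_mul_cancel₀ (by positivity : ((b:ℝ)^j₁) ≠ 0)] at h2
      rw [eR] at h1
      linarith
  have expand : (fun x : ℝ => (((C - x/2 : ℝ)):ℂ) * haar b j₁ m₁ ℓ₁ x)
      = fun x => ∑ k ∈ Finset.range b,
          Set.indicator (Set.Ico (δ*((b:ℝ)*m₁+k)) (δ*((b:ℝ)*m₁+k+1)))
          (fun y => (((C - y/2 : ℝ)):ℂ) * bexp b ℓ₁ k) x := by
    ext x
    rw [haar, ← hδdef, Finset.mul_sum]
    apply Finset.sum_congr rfl
    intro k _
    by_cases h : δ*((b:ℝ)*m₁+k) ≤ x ∧ x < δ*((b:ℝ)*m₁+k+1)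
    · rw [if_pos h, Set.indicator_of_mem (Set.mem_Ico.2 h)]
    · rw [if_neg h, Set.indicator_of_notMem (fun hmem => h (Set.mem_Ico.1 hmem)), mul_zero]
  have hint : ∀ k ∈ Finset.range b, IntegrableOn
      (Set.indicator (Set.Ico (δ*((b:ℝ)*m₁+k)) (δ*((b:ℝ)*m₁+k+1)))
        (fun y => (((C - y/2 : ℝ)):ℂ) * bexp b ℓ₁ k)) (Set.Ico (0:ℝ) 1) volume := by
    intro k _
    apply Integrable.indicator _ measurableSet_Ico
    apply MeasureTheory.IntegrableOn.mono_set (t := Set.Icc (0:ℝ) 1) _ Set.Ico_subset_Icc_self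
    apply Continuous.integrableOn_Icc
    fun_prop
  rw [expand, MeasureTheory.integral_finset_sum _ hint]
  have hterm : ∀ k ∈ Finset.range b,
      (∫ x in Set.Ico (0:ℝ) 1, Set.indicator (Set.Ico (δ*((b:ℝ)*m₁+k)) (δ*((b:ℝ)*m₁+k+1)))
        (fun y => (((C - y/2 : ℝ)):ℂ) * bexp b ℓ₁ k) x)
      = (((C*δ - (2*(δ*((b:ℝ)*m₁))*δ + δ^2)/4 : ℝ)):ℂ) * ω^k
        + (((-(δ^2)/2 : ℝ)):ℂ) * ((k:ℂ) * ω^k) := by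
    intro k hk
    rw [MeasureTheory.setIntegral_indicator measurableSet_Ico,
      Set.inter_eq_self_of_subset_right (hsub k hk)]
    have hle : δ*((b:ℝ)*m₁+k) ≤ δ*((b:ℝ)*m₁+k+1) :=
      mul_le_mul_of_nonneg_left (by linarith) hδ0.le
    have hmc : (∫ x in Set.Ico (δ*((b:ℝ)*m₁+k)) (δ*((b:ℝ)*m₁+k+1)),
          (((C - x/2 : ℝ)):ℂ) * bexp b ℓ₁ k)
        = (∫ x in Set.Ico (δ*((b:ℝ)*m₁+k)) (δ*((b:ℝ)*m₁+k+1)), (((C - x/2 : ℝ)):ℂ))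
            * bexp b ℓ₁ k := by
      simpa [smul_eq_mul] using
        integral_smul_const
          (μ := volume.restrict (Set.Ico (δ*((b:ℝ)*m₁+k)) (δ*((b:ℝ)*m₁+k+1))))
          (fun x => (((C - x/2 : ℝ)):ℂ)) (bexp b ℓ₁ k)
    rw [hmc, show (∫ x in Set.Ico (δ*((b:ℝ)*m₁+k)) (δ*((b:ℝ)*m₁+k+1)), (((C - x/2 : ℝ)):ℂ))
        = ((∫ x in Set.Ico (δ*((b:ℝ)*m₁+k)) (δ*((b:ℝ)*m₁+k+1)), (C - x/2 : ℝ) : ℝ) : ℂ)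
        from integral_ofReal,
      integral_linear _ _ C hle, bexp_pow b ℓ₁ k, ← hωdef]
    push_cast
    ring
  rw [Finset.sum_congr rfl hterm, Finset.sum_add_distrib, ← Finset.mul_sum, ← Finset.mul_sum,
    sum_bexp b ℓ₁ hb hℓ₁ hℓ₁', mul_zero, zero_add, sum_k_bexp b ℓ₁ hb hℓ₁ hℓ₁']
  have hω1 : ω - 1 = Complex.exp (2 * Real.pi * Complex.I * ℓ₁ / b) - 1 := by
    rw [hωdef, bexp]
    norm_num
  rw [← hω1, norm_mul, norm_div, Complex.norm_real, Real.norm_eq_abs, Complex.norm_natCast]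
  have hq : |(-(δ^2)/2 : ℝ)| = δ^2/2 := by
    rw [abs_div, abs_neg, abs_of_nonneg (sq_nonneg δ)]
    norm_num
  rw [hq]
  rw [show δ^2/2 * ((b:ℝ) / ‖ω-1‖) = (δ^2/2*(b:ℝ)) / ‖ω-1‖ from by ring]
  congr 1
  rw [hδdef, show (-2*(j₁:ℤ)-1) = -((2*j₁+1 : ℕ):ℤ) from by push_cast; ring,
    zpow_neg, zpow_natCast]
  field_simp
  ring
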